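/- Let (X,T) be a complex linear dynamical system. Then for every λ ∈ ℂ with |λ| = 1, the set of recurrent points of T equals the set of recurrent points of λT: Rec(T) = Rec(λT). -/

import Mathlib

open Filter Topology Set

/-- A point `x` is recurrent for `T` if `x` belongs to the closure of `{T^n x : n ≥ 1}`. -/
def RecPt {X : Type*} [TopologicalSpace X] (T : X → X) (x : X) : Prop :=
  x ∈ closure (Set.range fun n : ℕ => T^[n + 1] x)

private lemma iter_smul {X : Type*} [AddCommGroup X] [Module ℂ X] [TopologicalSpace X]
    (S : X →L[ℂ] X) (μ : ℂ) : ∀ (n : ℕ) (y : X),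
    (fun y : X => μ • S y)^[n] y = μ ^ n • S^[n] y := by
  intro n
  induction n with
  | zero => intro y; simp
  | succ n ih =>
    intro y
    rw [Function.iterate_succ_apply', Function.iterate_succ_apply', ih, map_smul,
      smul_smul, pow_succ']

private lemma rec_smul_aux {X : Type*} [AddCommGroup X] [Module ℂ X] [TopologicalSpace X]
    [IsTopologicalAddGroup X] [ContinuousSMul ℂ X]
    (S : X →L[ℂ] X) (μ : ℂ) (hμ : ‖μ‖ = 1) (x : X)
    (hx : RecPt (⇑S) x) : RecPt (fun y : X => μ • S y) x := by
  rw [RecPt, mem_closure_iff_nhds]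
  intro U hU
  -- Step 1: joint continuity of smul at (1, x)
  have hsmul : Filter.Tendsto (fun p : ℂ × X => p.1 • p.2) (𝓝 ((1 : ℂ), x)) (𝓝 x) := by
    have h := (continuous_smul (M := ℂ) (X := X)).tendsto ((1 : ℂ), x)
    simpa using h
  have hpre : (fun p : ℂ × X => p.1 • p.2) ⁻¹' U ∈ 𝓝 ((1 : ℂ), x) := hsmul hU
  rw [mem_nhds_prod_iff] at hpre
  obtain ⟨A, hA, B, hB, hAB⟩ := hpre
  obtain ⟨δ, hδpos, hball⟩ := Metric.mem_nhds_iff.1 hA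
  obtain ⟨V, hVB, hVopen, hxV⟩ := mem_nhds_iff.1 hB
  -- recurrence: returns into any open nbhd of x
  have hrec : ∀ W : Set X, IsOpen W → x ∈ W → ∃ n : ℕ, S^[n + 1] x ∈ W := by
    intro W hWo hxW
    obtain ⟨z, hzW, hzr⟩ := mem_closure_iff.1 hx W hWo hxW
    obtain ⟨n, rfl⟩ := hzr
    exact ⟨n, hzW⟩
  choose! f hf using hrec
  -- state machine: (current total exponent, current open nbhd of x)
  let σ := {p : ℕ × Set X // IsOpen p.2 ∧ x ∈ p.2}
  let next : σ → σ := fun s =>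
    ⟨(s.1.1 + (f s.1.2 + 1), s.1.2 ∩ (S^[f s.1.2 + 1]) ⁻¹' s.1.2),
      s.2.1.inter (s.2.1.preimage (S.continuous.iterate _)),
      s.2.2, hf s.1.2 s.2.1 s.2.2⟩
  let st : ℕ → σ := fun j => next^[j] ⟨(0, V), hVopen, hxV⟩
  let a : ℕ → ℕ := fun j => (st j).1.1
  let W : ℕ → Set X := fun j => (st j).1.2
  have hst_succ : ∀ j, st (j + 1) = next (st j) := by
    intro j
    simp only [st, Function.iterate_succ_apply']
  have ha_succ : ∀ j, a (j + 1) = a j + (f (W j) + 1) := by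
    intro j; simp only [a, hst_succ, next, W]
  have hW_succ : ∀ j, W (j + 1) = W j ∩ (S^[f (W j) + 1]) ⁻¹' (W j) := by
    intro j; simp only [W, hst_succ, next]
  have hxW : ∀ j, x ∈ W j := fun j => (st j).2.2
  have hW0 : W 0 = V := rfl
  clear_value a W st next
  have hWV : ∀ j, W j ⊆ V := by
    intro j
    induction j with
    | zero => exact hW0.le
    | succ j ih => rw [hW_succ]; exact fun z hz => ih hz.1
  have hamono : ∀ i j, i ≤ j → a i ≤ a j := by
    intro i j hij
    induction j, hij using Nat.le_induction with
    | base => exact le_rfl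
    | succ j hij ih => exact ih.trans (by rw [ha_succ]; omega)
  have key : ∀ i j, i ≤ j → ∀ z ∈ W j, S^[a j - a i] z ∈ W i := by
    intro i j hij
    induction j, hij using Nat.le_induction with
    | base => intro z hz; simpa using hz
    | succ j hij ih =>
      intro z hz
      rw [hW_succ] at hz
      have heq : a (j + 1) - a i = (a j - a i) + (f (W j) + 1) := by
        have h1 := ha_succ j
        have h2 := hamono i j hij
        omega
      rw [heq, Function.iterate_add_apply]
      exact ih _ hz.2
  have hastrict : ∀ j, a j < a (j + 1) := by intro j; rw [ha_succ]; omega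
  -- circle compactness: find i < j with μ^(a j - a i) close to 1
  have habs : ∀ n : ℕ, ‖μ ^ n‖ = 1 := by
    intro n; rw [norm_pow, hμ, one_pow]
  have hmem : ∀ j : ℕ, μ ^ (a j) ∈ Metric.sphere (0 : ℂ) 1 := by
    intro j
    simp [Complex.dist_eq, habs, hμ]
  obtain ⟨w, -, φ, hφ, hlim⟩ := (isCompact_sphere (0 : ℂ) 1).tendsto_subseq hmem
  rw [Metric.tendsto_atTop] at hlim
  obtain ⟨N, hN⟩ := hlim (δ / 2) (by linarith)
  have hd1 := hN N le_rfl
  have hd2 := hN (N + 1) (by omega)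
  have hclose : dist (μ ^ (a (φ N))) (μ ^ (a (φ (N + 1)))) < δ := by
    calc dist (μ ^ (a (φ N))) (μ ^ (a (φ (N + 1))))
        ≤ dist (μ ^ (a (φ N))) w + dist w (μ ^ (a (φ (N + 1)))) := dist_triangle _ _ _
      _ < δ / 2 + δ / 2 := by
          rw [dist_comm w]
          exact add_lt_add hd1 hd2
      _ = δ := by ring
  set i := a (φ N) with hi
  set j := a (φ (N + 1)) with hj
  have hij : i < j := by
    have := hφ (Nat.lt_succ_self N)
    have h2 : φ N < φ (N + 1) := this
    have : a (φ N) < a (φ (N + 1)) := by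
      have := hamono (φ N + 1) (φ (N + 1)) h2
      have := hastrict (φ N)
      omega
    exact this
  set m := j - i with hm
  have hm1 : 1 ≤ m := by omega
  have hjim : j = i + m := by omega
  have hμm : μ ^ m ∈ Metric.ball (1 : ℂ) δ := by
    have : dist (μ ^ i) (μ ^ j) = ‖1 - μ ^ m‖ := by
      rw [Complex.dist_eq, hjim, pow_add]
      calc ‖μ ^ i - μ ^ i * μ ^ m‖
          = ‖μ ^ i * (1 - μ ^ m)‖ := by ring_nf
        _ = ‖μ ^ i‖ * ‖1 - μ ^ m‖ := norm_mul _ _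
        _ = ‖1 - μ ^ m‖ := by rw [habs, one_mul]
    have h2 : ‖μ ^ m - 1‖ < δ := by
      rw [← neg_sub, norm_neg]
      rw [this] at hclose
      exact hclose
    simpa [Metric.mem_ball, Complex.dist_eq] using h2
  -- S^[m] x ∈ V
  have hSm : S^[m] x ∈ V := by
    have hk := key (φ N) (φ (N + 1)) (hφ (Nat.lt_succ_self N)).le x (hxW _)
    exact hWV _ (by simpa [← hi, ← hj, ← hm] using hk)
  -- conclude
  have hmain : μ ^ m • S^[m] x ∈ U := by
    have hp : ((μ : ℂ) ^ m, S^[m] x) ∈ A ×ˢ B := ⟨hball hμm, hVB hSm⟩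
    have h3 := hAB hp
    rwa [Set.mem_preimage] at h3
  refine ⟨(fun y : X => μ • S y)^[m] x, ?_, ⟨m - 1, ?_⟩⟩
  · rw [iter_smul]
    exact hmain
  · show (fun y : X => μ • S y)^[m - 1 + 1] x = _
    rw [Nat.sub_add_cancel hm1]

/-- For a continuous linear operator `T` on a separable infinite-dimensional complex
F-space and any unimodular `λ ∈ ℂ`, `Rec(T) = Rec(λT)`. -/
theorem stmt11 {X : Type*} [AddCommGroup X] [Module ℂ X] [TopologicalSpace X]
    [IsTopologicalAddGroup X] [ContinuousSMul ℂ X] [PolishSpace X]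
    (hX : ¬ FiniteDimensional ℂ X)
    (T : X →L[ℂ] X) (lam : ℂ) (hlam : ‖lam‖ = 1) :
    {x : X | RecPt (⇑T) x} = {x : X | RecPt (fun y : X => lam • T y) x} := by
  have hne : lam ≠ 0 := by
    intro h; rw [h] at hlam; simp at hlam
  ext x
  simp only [Set.mem_setOf_eq]
  constructor
  · intro hx
    exact rec_smul_aux T lam hlam x hx
  · intro hx
    have hinv : ‖lam⁻¹‖ = 1 := by rw [norm_inv, hlam, inv_one]
    have hx' : RecPt (⇑(lam • T)) x := by
      have : ⇑(lam • T) = fun y : X => lam • T y := by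
        ext y; simp
      rwa [this]
    have h2 := rec_smul_aux (lam • T) lam⁻¹ hinv x hx'
    have heq : (fun y : X => lam⁻¹ • (lam • T) y) = ⇑T := by
      ext y
      simp [smul_smul, inv_mul_cancel₀ hne]
    rwa [heq] at h2
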